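/- Let T be a bounded linear operator on a complex Hilbert space H, let x, y ∈ H, and let 0 ≤ α ≤ 1. Then |⟨T x, y⟩|² ≤ ⟨|T|^(2α) x, x⟩ · ⟨|T*|^(2(1-α)) y, y⟩, where |T| = (T*T)^(1/2). -/

import Mathlib

open scoped InnerProductSpace
open ContinuousLinearMap Complex

variable {H : Type*} [NormedAddCommGroup H] [InnerProductSpace ℂ H] [CompleteSpace H]

/-- `T ^ e` for a (positive) operator `T`, via the continuous functional calculus. -/
noncomputable def opow (T : H →L[ℂ] H) (e : ℝ) : H →L[ℂ] H :=
  cfc (fun t : ℝ => t ^ e) T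

/-- The absolute value `|T| = (T*T)^(1/2)` of an operator. -/
noncomputable def oabs (T : H →L[ℂ] H) : H →L[ℂ] H :=
  cfc Real.sqrt (ContinuousLinearMap.adjoint T * T)

namespace MixedSchwarzAux

lemma pow_intertwine (T : H →L[ℂ] H) (n : ℕ) :
    T * (star T * T) ^ n = (T * star T) ^ n * T := by
  induction n with
  | zero => simp
  | succ n ih =>
    calc T * (star T * T) ^ (n + 1)
        = T * ((star T * T) * (star T * T) ^ n) := by rw [pow_succ']
      _ = (T * star T) * (T * (star T * T) ^ n) := by noncomm_ring
      _ = (T * star T) * ((T * star T) ^ n * T) := by rw [ih]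
      _ = (T * star T) ^ (n + 1) * T := by rw [pow_succ']; noncomm_ring

open Polynomial in
lemma aeval_intertwine (T : H →L[ℂ] H) (q : ℝ[X]) :
    T * (aeval (star T * T) q) = aeval (T * star T) q * T := by
  induction q using Polynomial.induction_on' with
  | add p q hp hq => simp [map_add, mul_add, add_mul, hp, hq]
  | monomial n c =>
    simp only [aeval_monomial]
    calc T * (algebraMap ℝ _ c * (star T * T) ^ n)
        = algebraMap ℝ _ c * (T * (star T * T) ^ n) := by
          rw [← mul_assoc, ← Algebra.commutes, mul_assoc]
      _ = algebraMap ℝ _ c * ((T * star T) ^ n * T) := by rw [pow_intertwine]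
      _ = algebraMap ℝ _ c * (T * star T) ^ n * T := by rw [mul_assoc]

/-- The key intertwining identity `T f(T*T) = f(TT*) T`. -/
lemma cfc_intertwine (T : H →L[ℂ] H) (f : ℝ → ℝ) (hf : Continuous f) :
    T * cfc f (star T * T) = cfc f (T * star T) * T := by
  set A := star T * T with hA_def
  set B := T * star T with hB_def
  have hA : IsSelfAdjoint A := IsSelfAdjoint.star_mul_self T
  have hB : IsSelfAdjoint B := IsSelfAdjoint.mul_star_self T
  set M : ℝ := max (‖A‖ * ‖(1 : H →L[ℂ] H)‖) (‖B‖ * ‖(1 : H →L[ℂ] H)‖) with hM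
  have hsub : ∀ (C : H →L[ℂ] H), ‖C‖ * ‖(1 : H →L[ℂ] H)‖ ≤ M →
      spectrum ℝ C ⊆ Set.Icc (-M) M := by
    intro C hC t ht
    have h1 := spectrum.norm_le_norm_mul_of_mem ht
    rw [Real.norm_eq_abs] at h1
    exact Set.mem_Icc.mpr (abs_le.mp (h1.trans hC))
  have hsA : spectrum ℝ A ⊆ Set.Icc (-M) M := hsub A (le_max_left _ _)
  have hsB : spectrum ℝ B ⊆ Set.Icc (-M) M := hsub B (le_max_right _ _)
  let Φ₁ : C(Set.Icc (-M) M, ℝ) → (H →L[ℂ] H) := fun g => T * cfcHomSuperset hA hsA g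
  let Φ₂ : C(Set.Icc (-M) M, ℝ) → (H →L[ℂ] H) := fun g => cfcHomSuperset hB hsB g * T
  have hΦ₁ : Continuous Φ₁ := (continuous_mul_left T).comp (cfcHomSuperset_continuous hA hsA)
  have hΦ₂ : Continuous Φ₂ := (continuous_mul_right T).comp (cfcHomSuperset_continuous hB hsB)
  have hpoly : ∀ (a : H →L[ℂ] H) (ha : IsSelfAdjoint a) (hs : spectrum ℝ a ⊆ Set.Icc (-M) M)
      (q : Polynomial ℝ),
      cfcHomSuperset ha hs (Polynomial.toContinuousMapOnAlgHom _ q) = Polynomial.aeval a q := by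
    intro a ha hs q
    let ψ : Polynomial ℝ →ₐ[ℝ] (H →L[ℂ] H) :=
      (cfcHomSuperset ha hs).toAlgHom.comp (Polynomial.toContinuousMapOnAlgHom _)
    have h1 : Polynomial.aeval (ψ Polynomial.X) q = ψ q := by
      rw [Polynomial.aeval_algHom_apply, Polynomial.aeval_X_left_apply]
    have h2 : ψ Polynomial.X = a := by
      show cfcHomSuperset ha hs (Polynomial.toContinuousMapOn Polynomial.X _) = a
      rw [Polynomial.toContinuousMapOn_X_eq_restrict_id]
      exact cfcHomSuperset_id ha hs
    calc cfcHomSuperset ha hs (Polynomial.toContinuousMapOnAlgHom _ q) = ψ q := rfl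
      _ = Polynomial.aeval a q := by rw [← h1, h2]
  have hdense : Dense ((polynomialFunctions (Set.Icc (-M) M) : Set C(Set.Icc (-M) M, ℝ))) := by
    rw [dense_iff_closure_eq, ← Subalgebra.topologicalClosure_coe,
      polynomialFunctions_closure_eq_top, Algebra.coe_top]
  have hEq : Φ₁ = Φ₂ := by
    refine Continuous.ext_on hdense hΦ₁ hΦ₂ ?_
    intro g hg
    rw [polynomialFunctions_coe] at hg
    obtain ⟨q, rfl⟩ := hg
    show T * cfcHomSuperset hA hsA _ = cfcHomSuperset hB hsB _ * T
    rw [hpoly, hpoly, aeval_intertwine]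
  have key : ∀ (a : H →L[ℂ] H) (ha : IsSelfAdjoint a) (hs : spectrum ℝ a ⊆ Set.Icc (-M) M),
      cfcHomSuperset ha hs ((ContinuousMap.mk f hf).restrict _) = cfc f a := by
    intro a ha hs
    rw [cfc_apply f a ha hf.continuousOn]
    show cfcHom ha (((ContinuousMap.mk f hf).restrict _).comp _) = _
    congr 1
  have h := congrFun hEq ((ContinuousMap.mk f hf).restrict (Set.Icc (-M) M))
  simp only [Φ₁, Φ₂] at h
  rw [key A hA hsA, key B hB hsB] at h
  exact h

lemma re_inner_le {S S' : H →L[ℂ] H} (h : S ≤ S') (z : H) :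
    (⟪S z, z⟫_ℂ).re ≤ (⟪S' z, z⟫_ℂ).re := by
  have h0 : (S' - S).IsPositive := (ContinuousLinearMap.le_def S S').mp h
  have h1 := h0.inner_nonneg_left z
  simp only [ContinuousLinearMap.sub_apply, inner_sub_left, map_sub,
    RCLike.re_to_complex] at h1
  have h2 := (Complex.le_def.mp h1).1
  rw [Complex.zero_re, Complex.sub_re] at h2
  linarith

lemma inner_move {S : H →L[ℂ] H} (hS : IsSelfAdjoint S) (u v : H) :
    ⟪S u, v⟫_ℂ = ⟪u, S v⟫_ℂ := by
  have hadj : ContinuousLinearMap.adjoint S = S := by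
    rw [← ContinuousLinearMap.star_eq_adjoint]; exact hS
  conv_lhs => rw [← hadj, ContinuousLinearMap.adjoint_inner_left]

lemma quad_eq (T : H →L[ℂ] H) (w : H) :
    (⟪(star T * T) w, w⟫_ℂ).re = ‖T w‖ ^ 2 := by
  rw [ContinuousLinearMap.mul_apply, ContinuousLinearMap.star_eq_adjoint,
    ContinuousLinearMap.adjoint_inner_left, ← RCLike.re_to_complex, inner_self_eq_norm_sq]

end MixedSchwarzAux

open MixedSchwarzAux in
lemma opow_oabs (T : H →L[ℂ] H) (c : ℝ) (hc : 0 ≤ c) :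
    opow (oabs T) (2 * c) =
      cfc (fun t : ℝ => t ^ c) (ContinuousLinearMap.adjoint T * T) := by
  have hA : IsSelfAdjoint (ContinuousLinearMap.adjoint T * T) := by
    rw [← ContinuousLinearMap.star_eq_adjoint]; exact IsSelfAdjoint.star_mul_self T
  have hsp : ∀ t ∈ spectrum ℝ (ContinuousLinearMap.adjoint T * T), 0 ≤ t := by
    rw [← ContinuousLinearMap.star_eq_adjoint]
    exact spectrum_nonneg_of_nonneg (star_mul_self_nonneg T)
  rw [opow, oabs, ← cfc_comp' (fun t : ℝ => t ^ (2 * c)) Real.sqrt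
    (ContinuousLinearMap.adjoint T * T)
    ((Real.continuous_rpow_const (by positivity)).continuousOn)
    (Real.continuous_sqrt.continuousOn) hA]
  apply cfc_congr
  intro t ht
  have h0 : 0 ≤ t := hsp t ht
  show Real.sqrt t ^ (2 * c) = t ^ c
  rw [Real.sqrt_eq_rpow, ← Real.rpow_mul h0]
  congr 1
  ring

set_option maxHeartbeats 2000000 in
open MixedSchwarzAux in
/-- Generalized mixed Schwarz inequality. -/
theorem mixed_schwarz (T : H →L[ℂ] H) (x y : H) (α : ℝ) (hα0 : 0 ≤ α) (hα1 : α ≤ 1) :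
    ‖⟪T x, y⟫_ℂ‖ ^ 2 ≤
      (⟪opow (oabs T) (2 * α) x, x⟫_ℂ).re *
        (⟪opow (oabs (ContinuousLinearMap.adjoint T)) (2 * (1 - α)) y, y⟫_ℂ).re := by
  have h1α : (0 : ℝ) ≤ 1 - α := by linarith
  rw [opow_oabs T α hα0, opow_oabs (ContinuousLinearMap.adjoint T) (1 - α) h1α,
    ContinuousLinearMap.adjoint_adjoint]
  rw [← ContinuousLinearMap.star_eq_adjoint]
  set A := star T * T with hA_def
  set B := T * star T with hB_def
  have hA : IsSelfAdjoint A := IsSelfAdjoint.star_mul_self T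
  have hB : IsSelfAdjoint B := IsSelfAdjoint.mul_star_self T
  have hspA : ∀ t ∈ spectrum ℝ A, 0 ≤ t :=
    spectrum_nonneg_of_nonneg (star_mul_self_nonneg T)
  have hspB : ∀ t ∈ spectrum ℝ B, 0 ≤ t :=
    spectrum_nonneg_of_nonneg (mul_star_self_nonneg T)
  set P : H →L[ℂ] H := cfc (fun t : ℝ => t ^ (α / 2)) A with hP_def
  have hPsa : IsSelfAdjoint P := cfc_predicate _ A
  have hcont : ∀ c : ℝ, 0 ≤ c → Continuous (fun t : ℝ => t ^ c) := fun c hc =>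
    Real.continuous_rpow_const hc
  -- Claim 0 : the first factor is ‖P x‖ ^ 2
  have claim0 : (⟪cfc (fun t : ℝ => t ^ α) A x, x⟫_ℂ).re = ‖P x‖ ^ 2 := by
    have h1 : cfc (fun t : ℝ => t ^ α) A = P * P := by
      rw [hP_def, ← cfc_mul _ _ A ((hcont _ (by positivity)).continuousOn)
        ((hcont _ (by positivity)).continuousOn)]
      apply cfc_congr
      intro t ht
      have h0 : 0 ≤ t := hspA t ht
      show t ^ α = t ^ (α / 2) * t ^ (α / 2)
      rw [← Real.rpow_add_of_nonneg h0 (by positivity) (by positivity)]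
      congr 1
      ring
    rw [h1, ContinuousLinearMap.mul_apply, inner_move hPsa (P x) x, ← RCLike.re_to_complex,
      inner_self_eq_norm_sq]
  set R2 : ℝ := (⟪cfc (fun t : ℝ => t ^ (1 - α)) B y, y⟫_ℂ).re with hR2_def
  have hR2nn : 0 ≤ R2 := by
    have h0 : (0 : H →L[ℂ] H) ≤ cfc (fun t : ℝ => t ^ (1 - α)) B := by
      rw [← cfc_zero ℝ B]
      exact cfc_mono (fun t ht => Real.rpow_nonneg (hspB t ht) _)
        continuousOn_const ((hcont _ h1α).continuousOn)
    have h1 := re_inner_le h0 y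
    simpa using h1
  -- the key estimate, for every ε > 0
  have key : ∀ ε : ℝ, 0 < ε →
      ‖⟪T x, y⟫_ℂ‖ ≤ ‖P x‖ * Real.sqrt R2 + Real.sqrt ε * (‖x‖ * ‖y‖) := by
    intro ε hε
    set g : ℝ → ℝ := fun t => t / (|t| + ε) with hg_def
    set u : ℝ → ℝ := fun t => 1 - t / (|t| + ε) with hu_def
    set h : ℝ → ℝ := fun t => t ^ (1 - α / 2) / (|t| + ε) with hh_def
    have hden : ∀ t : ℝ, |t| + ε ≠ 0 := fun t => by positivity
    have hgc : Continuous g := Continuous.div continuous_id (continuous_abs.add continuous_const) hden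
    have huc : Continuous u :=
      Continuous.sub continuous_const (Continuous.div continuous_id (continuous_abs.add continuous_const) hden)
    have hhc : Continuous h :=
      Continuous.div (hcont _ (by linarith)) (continuous_abs.add continuous_const) hden
    have husa : IsSelfAdjoint (cfc u A) := cfc_predicate _ A
    have hhsa : IsSelfAdjoint (cfc h A) := cfc_predicate _ A
    -- decomposition
    have hdecomp : cfc g A + cfc u A = 1 := by
      rw [← cfc_add A g u hgc.continuousOn huc.continuousOn, ← cfc_one ℝ A]
      apply cfc_congr
      intro t _
      show g t + u t = 1
      simp [hg_def, hu_def]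
    have hsplit : ⟪T x, y⟫_ℂ = ⟪T ((cfc g A) x), y⟫_ℂ + ⟪T ((cfc u A) x), y⟫_ℂ := by
      have hxx : (cfc g A) x + (cfc u A) x = x := by
        rw [← ContinuousLinearMap.add_apply, hdecomp, ContinuousLinearMap.one_apply]
      conv_lhs => rw [← hxx]
      rw [map_add, inner_add_left]
    -- error term bound
    have herr : ‖⟪T ((cfc u A) x), y⟫_ℂ‖ ≤ Real.sqrt ε * (‖x‖ * ‖y‖) := by
      have hq : ‖T ((cfc u A) x)‖ ^ 2 =
          (⟪(cfc u A * (A * cfc u A)) x, x⟫_ℂ).re := by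
        rw [← quad_eq T ((cfc u A) x), ← hA_def]
        congr 1
        rw [ContinuousLinearMap.mul_apply, ContinuousLinearMap.mul_apply]
        exact (inner_move husa (A ((cfc u A) x)) x).symm
      have hop : cfc u A * (A * cfc u A) = cfc (fun t => u t * (t * u t)) A := by
        have e1 : cfc (fun t : ℝ => t * u t) A = cfc (fun t : ℝ => t) A * cfc u A :=
          cfc_mul _ _ A continuous_id.continuousOn huc.continuousOn
        rw [cfc_id' ℝ A] at e1
        rw [cfc_mul u (fun t => t * u t) A huc.continuousOn
          ((continuous_id.mul huc)).continuousOn, e1]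
      have hmono : cfc (fun t => u t * (t * u t)) A ≤ cfc (fun _ => ε) A := by
        apply cfc_mono (hf := (huc.mul (continuous_id.mul huc)).continuousOn)
          (hg := continuousOn_const)
        intro t ht
        have h0 : 0 ≤ t := hspA t ht
        have hd : 0 < t + ε := by linarith
        have hut : u t = ε / (t + ε) := by
          rw [hu_def]
          simp only
          rw [_root_.abs_of_nonneg h0]
          field_simp
          ring
        show u t * (t * u t) ≤ ε
        rw [hut]
        have h2 : ε / (t + ε) ≤ 1 := by rw [div_le_one hd]; linarith
        have h3 : 0 ≤ t * (ε / (t + ε)) := by positivity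
        calc ε / (t + ε) * (t * (ε / (t + ε))) ≤ 1 * (t * (ε / (t + ε))) :=
              mul_le_mul_of_nonneg_right h2 h3
          _ = t * (ε / (t + ε)) := one_mul _
          _ ≤ (t + ε) * (ε / (t + ε)) := by
              apply mul_le_mul_of_nonneg_right (by linarith) (by positivity)
          _ = ε := by field_simp
      have halg : (⟪(cfc (fun _ : ℝ => ε) A) x, x⟫_ℂ).re = ε * ‖x‖ ^ 2 := by
        have hxx : (⟪x, x⟫_ℂ).re = ‖x‖ ^ 2 := by
          rw [← RCLike.re_to_complex, inner_self_eq_norm_sq]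
        rw [cfc_const ε A hA, Algebra.algebraMap_eq_smul_one, ContinuousLinearMap.smul_apply,
          ContinuousLinearMap.one_apply, RCLike.real_smul_eq_coe_smul (K := ℂ),
          inner_smul_real_left, Complex.smul_re, hxx, smul_eq_mul]
      have hbound : ‖T ((cfc u A) x)‖ ^ 2 ≤ ε * ‖x‖ ^ 2 := by
        rw [hq, hop]
        exact (re_inner_le hmono x).trans (le_of_eq halg)
      have hTw : ‖T ((cfc u A) x)‖ ≤ Real.sqrt ε * ‖x‖ := by
        have h4 : ‖T ((cfc u A) x)‖ ≤ Real.sqrt (ε * ‖x‖ ^ 2) := by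
          rw [← Real.sqrt_sq (norm_nonneg (T ((cfc u A) x)))]
          exact Real.sqrt_le_sqrt hbound
        rwa [Real.sqrt_mul hε.le, Real.sqrt_sq (norm_nonneg x)] at h4
      calc ‖⟪T ((cfc u A) x), y⟫_ℂ‖ ≤ ‖T ((cfc u A) x)‖ * ‖y‖ := norm_inner_le_norm _ _
        _ ≤ (Real.sqrt ε * ‖x‖) * ‖y‖ := mul_le_mul_of_nonneg_right hTw (norm_nonneg _)
        _ = Real.sqrt ε * (‖x‖ * ‖y‖) := by ring
    -- main term bound
    have hmain : ‖⟪T ((cfc g A) x), y⟫_ℂ‖ ≤ ‖P x‖ * Real.sqrt R2 := by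
      -- factor g = h * (·^(α/2)) on the spectrum
      have hfact : cfc g A = cfc h A * P := by
        rw [hP_def, ← cfc_mul h _ A hhc.continuousOn ((hcont _ (by positivity)).continuousOn)]
        apply cfc_congr
        intro t ht
        have h0 : 0 ≤ t := hspA t ht
        show g t = h t * t ^ (α / 2)
        rw [hg_def, hh_def]
        simp only
        rw [_root_.abs_of_nonneg h0, div_mul_eq_mul_div,
          ← Real.rpow_add_of_nonneg h0 (by linarith) (by positivity)]
        have he : 1 - α / 2 + α / 2 = (1 : ℝ) := by ring
        rw [he, Real.rpow_one]
      -- norm of the second vector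
      have hzbound : ‖cfc h A ((star T) y)‖ ≤ Real.sqrt R2 := by
        have hhh : cfc (fun t => h t * h t) A = cfc h A * cfc h A :=
          cfc_mul _ _ A hhc.continuousOn hhc.continuousOn
        have hz2 : ‖cfc h A ((star T) y)‖ ^ 2 =
            (⟪(T * cfc (fun t => h t * h t) A * star T) y, y⟫_ℂ).re := by
          rw [← RCLike.re_to_complex, ← inner_self_eq_norm_sq (𝕜 := ℂ), RCLike.re_to_complex]
          congr 1
          rw [ContinuousLinearMap.mul_apply, ContinuousLinearMap.mul_apply, hhh,
            ContinuousLinearMap.mul_apply]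
          calc ⟪cfc h A ((star T) y), cfc h A ((star T) y)⟫_ℂ
              = ⟪cfc h A (cfc h A ((star T) y)), (star T) y⟫_ℂ :=
                (inner_move hhsa (cfc h A ((star T) y)) ((star T) y)).symm
            _ = ⟪T (cfc h A (cfc h A ((star T) y))), y⟫_ℂ := by
                rw [ContinuousLinearMap.star_eq_adjoint,
                  ContinuousLinearMap.adjoint_inner_right]
        have hop2 : T * cfc (fun t => h t * h t) A * star T =
            cfc (fun t => h t * h t * t) B := by
          rw [cfc_intertwine T (fun t => h t * h t) (hhc.mul hhc)]
          have e2 : cfc (fun t : ℝ => (h t * h t) * t) B =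
              cfc (fun t => h t * h t) B * cfc (fun t : ℝ => t) B :=
            cfc_mul _ _ B (hhc.mul hhc).continuousOn continuous_id.continuousOn
          rw [cfc_id' ℝ B] at e2
          rw [mul_assoc, ← hB_def, ← e2]
        have hmono2 : cfc (fun t => h t * h t * t) B ≤ cfc (fun t : ℝ => t ^ (1 - α)) B := by
          apply cfc_mono (hf := ((hhc.mul hhc).mul continuous_id).continuousOn)
            (hg := (hcont _ h1α).continuousOn)
          intro t ht
          have h0 : 0 ≤ t := hspB t ht
          rcases eq_or_lt_of_le h0 with h0' | hpos
          · rw [hh_def]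
            show (t ^ (1 - α / 2) / (|t| + ε)) * (t ^ (1 - α / 2) / (|t| + ε)) * t ≤ t ^ (1 - α)
            rw [← h0', abs_zero, Real.zero_rpow (by intro hc; linarith : (1 : ℝ) - α / 2 ≠ 0)]
            simp [Real.rpow_nonneg (le_refl (0 : ℝ))]
          · rw [hh_def]
            show (t ^ (1 - α / 2) / (|t| + ε)) * (t ^ (1 - α / 2) / (|t| + ε)) * t ≤ t ^ (1 - α)
            rw [_root_.abs_of_nonneg h0]
            have hcc : t ^ (1 - α / 2) * t ^ (1 - α / 2) = t ^ (1 - α) * t := by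
              have e9 : t ^ (1 - α) * t = t ^ (1 - α) * t ^ (1 : ℝ) := by
                rw [Real.rpow_one]
              rw [← Real.rpow_add hpos, e9, ← Real.rpow_add hpos]
              congr 1
              ring
            rw [div_mul_div_comm, div_mul_eq_mul_div, div_le_iff₀ (by positivity), hcc]
            have h6 : t * t ≤ (t + ε) * (t + ε) := by nlinarith
            calc t ^ (1 - α) * t * t = t ^ (1 - α) * (t * t) := by ring
              _ ≤ t ^ (1 - α) * ((t + ε) * (t + ε)) :=
                  mul_le_mul_of_nonneg_left h6 (Real.rpow_nonneg h0 _)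
        have hz2' : ‖cfc h A ((star T) y)‖ ^ 2 ≤ R2 := by
          rw [hz2, hop2]
          exact re_inner_le hmono2 y
        have h5 : ‖cfc h A ((star T) y)‖ ≤ Real.sqrt R2 := by
          rw [← Real.sqrt_sq (norm_nonneg (cfc h A ((star T) y)))]
          exact Real.sqrt_le_sqrt hz2'
        exact h5
      calc ‖⟪T ((cfc g A) x), y⟫_ℂ‖
          = ‖⟪P x, cfc h A ((star T) y)⟫_ℂ‖ := by
            rw [hfact, ContinuousLinearMap.mul_apply,
              ← ContinuousLinearMap.adjoint_inner_right T,
              inner_move hhsa (P x) (ContinuousLinearMap.adjoint T y),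
              ← ContinuousLinearMap.star_eq_adjoint]
        _ ≤ ‖P x‖ * ‖cfc h A ((star T) y)‖ := norm_inner_le_norm _ _
        _ ≤ ‖P x‖ * Real.sqrt R2 :=
            mul_le_mul_of_nonneg_left hzbound (norm_nonneg _)
    calc ‖⟪T x, y⟫_ℂ‖ = ‖⟪T ((cfc g A) x), y⟫_ℂ + ⟪T ((cfc u A) x), y⟫_ℂ‖ := by rw [← hsplit]
      _ ≤ ‖⟪T ((cfc g A) x), y⟫_ℂ‖ + ‖⟪T ((cfc u A) x), y⟫_ℂ‖ := norm_add_le _ _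
      _ ≤ ‖P x‖ * Real.sqrt R2 + Real.sqrt ε * (‖x‖ * ‖y‖) := add_le_add hmain herr
  -- take ε → 0
  have hle : ‖⟪T x, y⟫_ℂ‖ ≤ ‖P x‖ * Real.sqrt R2 := by
    refine le_of_forall_pos_le_add fun δ hδ => ?_
    have hK0 : 0 ≤ ‖x‖ * ‖y‖ := by positivity
    have h7 := key ((δ / (‖x‖ * ‖y‖ + 1)) ^ 2) (by positivity)
    rw [Real.sqrt_sq (by positivity)] at h7
    refine h7.trans ?_
    have h8 : δ / (‖x‖ * ‖y‖ + 1) * (‖x‖ * ‖y‖) ≤ δ := by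
      rw [div_mul_eq_mul_div, div_le_iff₀ (by positivity)]
      nlinarith
    linarith
  rw [claim0]
  calc ‖⟪T x, y⟫_ℂ‖ ^ 2 ≤ (‖P x‖ * Real.sqrt R2) ^ 2 :=
        pow_le_pow_left₀ (norm_nonneg _) hle 2
    _ = ‖P x‖ ^ 2 * R2 := by
        rw [mul_pow, Real.sq_sqrt hR2nn]
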